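/- Let G be a finite simple graph on V vertices and let λ₁(G) denote the second-smallest eigenvalue of its Laplacian matrix. Then for every nonempty vertex subset S with 2·|S| ≤ V, one has λ₁(G) ≤ 2·|∂S|/|S|, where ∂S is the set of edges of G with exactly one endpoint in S. -/

import Mathlib

open Matrix Finset

/-- The second-smallest eigenvalue (counted with multiplicity) of the Laplacian matrix of a
finite simple graph `G`.  Since the constant vector is always an eigenvector of the Laplacian
with eigenvalue `0`, by the Courant–Fischer min-max principle this equals the infimum of the
Rayleigh quotient `⟨x, L x⟩ / ⟨x, x⟩` over nonzero vectors `x` orthogonal to the constants. -/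
noncomputable def SimpleGraph.lambdaOne {V : Type*} [Fintype V] [DecidableEq V]
    (G : SimpleGraph V) [DecidableRel G.Adj] : ℝ :=
  sInf { r : ℝ | ∃ x : V → ℝ, x ≠ 0 ∧ (∑ v, x v) = 0 ∧
    r = (x ⬝ᵥ (G.lapMatrix ℝ *ᵥ x)) / (x ⬝ᵥ x) }

open Classical in
/-- The set `∂S` of edges of `G` having exactly one endpoint in the vertex set `S`. -/
noncomputable def SimpleGraph.edgeBoundary {V : Type*} [Fintype V] [DecidableEq V]
    (G : SimpleGraph V) [DecidableRel G.Adj] (S : Finset V) : Finset (Sym2 V) :=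
  G.edgeFinset.filter (fun e => ∃ u v, e = s(u, v) ∧ u ∈ S ∧ v ∉ S)

/-- The Cheeger constant of a finite simple graph: the minimum of
`|∂S| / min {|S|, |Sᶜ|}` over all nonempty proper vertex subsets `S`. -/
noncomputable def SimpleGraph.cheegerConstant {V : Type*} [Fintype V] [DecidableEq V]
    (G : SimpleGraph V) [DecidableRel G.Adj] : ℝ :=
  sInf { r : ℝ | ∃ S : Finset V, S.Nonempty ∧ S ≠ Finset.univ ∧
    r = (G.edgeBoundary S).card / (min S.card Sᶜ.card : ℝ) }

-- counting lemma: ordered crossing adjacent pairs (S → Sᶜ) are in bijection with ∂S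
lemma card_cross {V : Type*} [Fintype V] [DecidableEq V]
    (G : SimpleGraph V) [DecidableRel G.Adj] (S : Finset V) :
    ((univ ×ˢ univ).filter (fun p : V × V => G.Adj p.1 p.2 ∧ p.1 ∈ S ∧ p.2 ∉ S)).card
      = (G.edgeBoundary S).card := by
  classical
  apply Finset.card_bij (fun p _ => s(p.1, p.2))
  · rintro ⟨u, v⟩ hp
    simp only [mem_filter, mem_product] at hp
    obtain ⟨-, hadj, hu, hv⟩ := hp
    simp only [SimpleGraph.edgeBoundary, mem_filter, SimpleGraph.mem_edgeFinset,
      SimpleGraph.mem_edgeSet]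
    exact ⟨hadj, u, v, rfl, hu, hv⟩
  · rintro ⟨u, v⟩ hp ⟨u', v'⟩ hp' h
    simp only [mem_filter, mem_product] at hp hp'
    rw [Sym2.eq_iff] at h
    rcases h with ⟨rfl, rfl⟩ | ⟨rfl, rfl⟩
    · rfl
    · exact absurd hp.2.2.1 hp'.2.2.2
  · intro e he
    simp only [SimpleGraph.edgeBoundary, mem_filter, SimpleGraph.mem_edgeFinset,
      SimpleGraph.mem_edgeSet] at he
    obtain ⟨hadj, u, v, rfl, hu, hv⟩ := he
    rw [SimpleGraph.mem_edgeSet] at hadj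
    exact ⟨(u, v), by simp [hadj, hu, hv], rfl⟩


/-- For any finite simple graph `G` on `V` vertices and any nonempty vertex subset `S` with
`2|S| ≤ V`, the second-smallest Laplacian eigenvalue satisfies `λ₁(G) ≤ 2 |∂S| / |S|`. -/
theorem lambdaOne_le_two_boundary_div_card {V : Type*} [Fintype V] [DecidableEq V]
    (G : SimpleGraph V) [DecidableRel G.Adj]
    (S : Finset V) (hS : S.Nonempty) (hcard : 2 * S.card ≤ Fintype.card V) :
    G.lambdaOne ≤ 2 * (G.edgeBoundary S).card / (S.card : ℝ) := by
  classical
  set n : ℕ := Fintype.card V with hn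
  set s : ℕ := S.card with hsdef
  set sc : ℕ := Sᶜ.card with hscdef
  have hssc : s + sc = n := S.card_add_card_compl
  have hs1 : 1 ≤ s := hS.card_pos
  have hsc : s ≤ sc := by omega
  have hns : (n : ℝ) = (s : ℝ) + (sc : ℝ) := by exact_mod_cast hssc.symm
  have hspos : (0:ℝ) < s := by exact_mod_cast hs1
  have hscpos : (0:ℝ) < sc := lt_of_lt_of_le hspos (by exact_mod_cast hsc)
  have hnpos : (0:ℝ) < n := by rw [hns]; linarith
  set B : ℝ := ((G.edgeBoundary S).card : ℝ) with hB
  have hBnn : (0:ℝ) ≤ B := Nat.cast_nonneg _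
  set x : V → ℝ := fun v => if v ∈ S then (sc : ℝ) else -(s : ℝ) with hx
  have hf1 : univ.filter (fun v => v ∈ S) = S := by ext v; simp
  have hf2 : univ.filter (fun v => v ∉ S) = Sᶜ := by ext v; simp
  -- x ≠ 0
  have hx0 : x ≠ 0 := by
    obtain ⟨v, hv⟩ := hS
    intro h
    have := congrFun h v
    simp only [hx, hv, if_pos, Pi.zero_apply] at this
    exact absurd this (ne_of_gt hscpos)
  -- sum is zero
  have hsum : (∑ v, x v) = 0 := by
    simp only [hx, Finset.sum_ite, Finset.sum_const, hf1, hf2, nsmul_eq_mul]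
    ring
  -- denominator
  have hxx : x ⬝ᵥ x = (s:ℝ) * sc * n := by
    have key : ∀ v, x v * x v = (if v ∈ S then ((sc:ℝ))^2 else ((s:ℝ))^2) := by
      intro v; by_cases h : v ∈ S <;> simp [hx, h] <;> ring
    simp only [dotProduct, key, Finset.sum_ite, Finset.sum_const, hf1, hf2, nsmul_eq_mul]
    rw [hns]; ring
  -- numerator
  have hquad : x ⬝ᵥ (G.lapMatrix ℝ *ᵥ x) = (n:ℝ)^2 * B := by
    rw [← Matrix.toLinearMap₂'_apply', SimpleGraph.lapMatrix_toLinearMap₂']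
    have key : ∀ i j : V, (if G.Adj i j then (x i - x j)^2 else 0) =
        (if G.Adj i j ∧ i ∈ S ∧ j ∉ S then ((n:ℝ))^2 else 0) +
        (if G.Adj i j ∧ j ∈ S ∧ i ∉ S then ((n:ℝ))^2 else 0) := by
      intro i j
      by_cases hij : G.Adj i j
      · by_cases hi : i ∈ S <;> by_cases hj : j ∈ S <;>
          simp [hx, hij, hi, hj, hns] <;> ring
      · simp [hij]
    simp_rw [key, Finset.sum_add_distrib]
    have h1 : ∑ i : V, ∑ j : V, (if G.Adj i j ∧ i ∈ S ∧ j ∉ S then ((n:ℝ))^2 else 0)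
        = (n:ℝ)^2 * B := by
      rw [← Finset.sum_product', ← Finset.sum_filter, Finset.sum_const, nsmul_eq_mul,
        card_cross]
      ring
    have h2 : ∑ i : V, ∑ j : V, (if G.Adj i j ∧ j ∈ S ∧ i ∉ S then ((n:ℝ))^2 else 0)
        = (n:ℝ)^2 * B := by
      rw [Finset.sum_comm]
      have hsymm : (∑ j : V, ∑ i : V, if G.Adj i j ∧ j ∈ S ∧ i ∉ S then ((n:ℝ))^2 else 0)
          = ∑ j : V, ∑ i : V, (if G.Adj j i ∧ j ∈ S ∧ i ∉ S then ((n:ℝ))^2 else 0) := by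
        refine Finset.sum_congr rfl fun j _ => Finset.sum_congr rfl fun i _ => ?_
        exact if_congr (and_congr_left' (G.adj_comm i j)) rfl rfl
      rw [hsymm]
      exact h1
    rw [h1, h2]; ring
  -- membership and bound
  have hmem : (x ⬝ᵥ (G.lapMatrix ℝ *ᵥ x)) / (x ⬝ᵥ x) ∈
      { r : ℝ | ∃ y : V → ℝ, y ≠ 0 ∧ (∑ v, y v) = 0 ∧
        r = (y ⬝ᵥ (G.lapMatrix ℝ *ᵥ y)) / (y ⬝ᵥ y) } :=
    ⟨x, hx0, hsum, rfl⟩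
  have hbdd : BddBelow { r : ℝ | ∃ y : V → ℝ, y ≠ 0 ∧ (∑ v, y v) = 0 ∧
      r = (y ⬝ᵥ (G.lapMatrix ℝ *ᵥ y)) / (y ⬝ᵥ y) } := by
    refine ⟨0, ?_⟩
    rintro r ⟨y, -, -, rfl⟩
    apply div_nonneg
    · have := (SimpleGraph.posSemidef_lapMatrix ℝ G).dotProduct_mulVec_nonneg y
      simpa using this
    · exact Finset.sum_nonneg fun i _ => mul_self_nonneg _
  refine le_trans (csInf_le hbdd hmem) ?_
  rw [hquad, hxx]
  rw [div_le_div_iff₀ (by positivity) hspos]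
  have h2sc : (n:ℝ) ≤ 2 * sc := by
    have : (2 * s : ℝ) ≤ n := by exact_mod_cast hcard
    linarith
  nlinarith [mul_nonneg (mul_nonneg (mul_nonneg hBnn hspos.le) hnpos.le)
    (by linarith : (0:ℝ) ≤ 2 * sc - n)]
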